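/- Let G be a tdlc group (a Hausdorff, locally compact, totally disconnected topological group) admitting a compact open subgroup with trivial normal core, and let Γ be a finitely generated cocompact lattice of G. Let K be a compact normal subgroup of G and H a finitely generated subgroup of the commensurator Comm_G(Γ) such that the subgroup KH (the subgroup generated by K and H, which equals the set product since K is normal) is virtually contained in the subgroup KΓ. Then H is virtually contained in Γ. -/

import Mathlib

open Subgroup Pointwise

/-- The conjugate `g A g⁻¹` of a subgroup. -/
def conjSubgroup {G : Type*} [Group G] (g : G) (A : Subgroup G) : Subgroup G :=
  A.map (MulAut.conj g).toMonoidHom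

lemma mem_conjSubgroup {G : Type*} [Group G] {g x : G} {A : Subgroup G} :
    x ∈ conjSubgroup g A ↔ ∃ a ∈ A, g * a * g⁻¹ = x := by
  simp [conjSubgroup, Subgroup.mem_map, MulAut.conj_apply]

lemma conjSubgroup_eq_comap {G : Type*} [Group G] (g : G) (A : Subgroup G) :
    conjSubgroup g A = A.comap (MulAut.conj g⁻¹).toMonoidHom := by
  ext x
  simp [mem_conjSubgroup, Subgroup.mem_comap, MulAut.conj_apply]
  constructor
  · rintro ⟨a, ha, rfl⟩; simpa [mul_assoc] using ha
  · intro h; exact ⟨g⁻¹ * x * g, by simpa [mul_assoc] using h, by group⟩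

lemma relIndex_conjSubgroup {G : Type*} [Group G] (A B : Subgroup G) (g : G) :
    (conjSubgroup g A).relIndex (conjSubgroup g B) = A.relIndex B := by
  rw [conjSubgroup_eq_comap, conjSubgroup_eq_comap, Subgroup.relIndex_comap,
    Subgroup.map_comap_eq_self_of_surjective (MulAut.conj g⁻¹).surjective]

lemma conjSubgroup_self {G : Type*} [Group G] (Γ : Subgroup G) {g : G} (hg : g ∈ Γ) :
    conjSubgroup g Γ = Γ := by
  ext x
  simp only [mem_conjSubgroup]
  constructor
  · rintro ⟨a, ha, rfl⟩; exact mul_mem (mul_mem hg ha) (inv_mem hg)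
  · intro h; exact ⟨g⁻¹ * x * g, by
      exact mul_mem (mul_mem (inv_mem hg) h) hg, by group⟩

lemma aux_transversal {G : Type*} [Group G] [TopologicalSpace G] [IsTopologicalGroup G]
    [LocallyCompactSpace G] (Γ : Subgroup G) (hcoc : CompactSpace (G ⧸ Γ)) :
    ∃ C₀ : Set G, IsCompact C₀ ∧ ∀ g : G, ∃ c ∈ C₀, c⁻¹ * g ∈ Γ := by
  have h1 : ∀ g : G, ∃ N : Set G, IsCompact N ∧ N ∈ nhds g := fun g =>
    exists_compact_mem_nhds g
  choose N hNc hNn using h1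
  have hcover : (Set.univ : Set (G ⧸ Γ)) ⊆ ⋃ g : G, QuotientGroup.mk '' interior (N g) := by
    rintro q -
    obtain ⟨g, rfl⟩ := QuotientGroup.mk_surjective q
    exact Set.mem_iUnion.2 ⟨g, ⟨g, mem_interior_iff_mem_nhds.2 (hNn g), rfl⟩⟩
  obtain ⟨t, ht⟩ := isCompact_univ.elim_finite_subcover _
    (fun g => QuotientGroup.isOpenMap_coe _ isOpen_interior) hcover
  refine ⟨⋃ g ∈ t, N g, t.isCompact_biUnion (fun g _ => hNc g), fun g => ?_⟩
  obtain ⟨a, hat, c, hc, hcg⟩ : ∃ a ∈ t, ∃ c ∈ interior (N a),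
      QuotientGroup.mk c = (QuotientGroup.mk g : G ⧸ Γ) := by
    have := ht (Set.mem_univ (QuotientGroup.mk g))
    simp only [Set.mem_iUnion, Set.mem_image] at this
    obtain ⟨a, hat, c, hc, hcg⟩ := this
    exact ⟨a, hat, c, hc, hcg⟩
  refine ⟨c, Set.mem_biUnion hat (interior_subset hc), ?_⟩
  exact (QuotientGroup.eq).1 hcg

lemma aux_unif {G : Type*} [Group G] [TopologicalSpace G] [IsTopologicalGroup G]
    {U : Set G} (hU : IsOpen U) (hU1 : (1 : G) ∈ U) {C₀ : Set G} (hC : IsCompact C₀) :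
    ∃ W : Set G, IsOpen W ∧ (1 : G) ∈ W ∧ ∀ c ∈ C₀, ∀ w ∈ W, c * w * c⁻¹ ∈ U := by
  have key : ∀ c : G, ∃ O : Set G, ∃ Wc : Set G, IsOpen O ∧ c ∈ O ∧ IsOpen Wc ∧ (1 : G) ∈ Wc ∧
      ∀ a ∈ O, ∀ w ∈ Wc, a * w * a⁻¹ ∈ U := by
    intro c
    have hcont : Continuous fun p : G × G => p.1 * p.2 * p.1⁻¹ := by continuity
    have hop : IsOpen ((fun p : G × G => p.1 * p.2 * p.1⁻¹) ⁻¹' U) := hU.preimage hcont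
    have hmem : (c, (1 : G)) ∈ (fun p : G × G => p.1 * p.2 * p.1⁻¹) ⁻¹' U := by
      simp [hU1]
    rcases isOpen_prod_iff.mp hop c 1 hmem with ⟨O, Wc, hO, hW, hcO, h1W, hsub⟩
    exact ⟨O, Wc, hO, hcO, hW, h1W, fun a ha w hw => hsub (Set.mk_mem_prod ha hw)⟩
  choose O Wc hO hcO hW h1W hsub using key
  obtain ⟨t, ht⟩ := hC.elim_finite_subcover O hO
    (fun c hc => Set.mem_iUnion.2 ⟨c, hcO c⟩)
  refine ⟨⋂ c ∈ t, Wc c, isOpen_biInter_finset (fun c _ => hW c), by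
    simp only [Set.mem_iInter]; exact fun c _ => h1W c, fun c hc w hw => ?_⟩
  obtain ⟨a, hat, hca⟩ : ∃ a ∈ t, c ∈ O a := by
    have := ht hc; simpa using this
  have hwa : w ∈ Wc a := by
    simp only [Set.mem_iInter] at hw; exact hw a hat
  exact hsub a c hca w hwa

lemma aux_orbit {G : Type*} [Group G] (Γ : Subgroup G) (f : G) {Fs : Set G} (hFs : Fs.Finite)
    (horb : ∀ γ ∈ Γ, γ * f * γ⁻¹ ∈ Fs) :
    (Subgroup.centralizer {f} ⊓ Γ).relIndex Γ ≠ 0 := by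
  set S := (Subgroup.centralizer {f} ⊓ Γ).subgroupOf Γ with hS
  have hfin : Finite (↥Γ ⧸ S) := by
    haveI := hFs.to_subtype
    set φ : ↥Γ ⧸ S → {x // x ∈ Fs} := fun q => Quotient.liftOn' q
      (fun γ => (⟨(γ : G) * f * (γ : G)⁻¹, horb γ γ.2⟩ : {x // x ∈ Fs}))
      (by
        intro a b hab
        rw [QuotientGroup.leftRel_apply] at hab
        have hmem : ((a⁻¹ * b : ↥Γ) : G) ∈ Subgroup.centralizer {f} ⊓ Γ := hab
        have hcomm : f * ((a : G)⁻¹ * b) = ((a : G)⁻¹ * b) * f := by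
          have := (Subgroup.mem_centralizer_iff.1 hmem.1) f rfl
          simpa using this
        apply Subtype.ext
        show (a : G) * f * (a : G)⁻¹ = (b : G) * f * (b : G)⁻¹
        have : (b : G) = (a : G) * ((a : G)⁻¹ * (b : G)) := by group
        rw [this]
        calc (a:G) * f * (a:G)⁻¹
            = (a:G) * (f * ((a:G)⁻¹ * (b:G))) * ((a:G)⁻¹*(b:G))⁻¹ * (a:G)⁻¹ := by group
          _ = (a:G) * (((a:G)⁻¹ * (b:G)) * f) * ((a:G)⁻¹*(b:G))⁻¹ * (a:G)⁻¹ := by rw [hcomm]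
          _ = (a:G) * ((a:G)⁻¹ * (b:G)) * f * ((a:G) * ((a:G)⁻¹ * (b:G)))⁻¹ := by group) with hφ
    have hinj : Function.Injective φ := by
      intro q q'
      induction q using Quotient.inductionOn'
      induction q' using Quotient.inductionOn'
      rename_i a b
      intro h
      have h' : (a : G) * f * (a : G)⁻¹ = (b : G) * f * (b : G)⁻¹ := congrArg Subtype.val h
      apply Quotient.sound'
      rw [QuotientGroup.leftRel_apply]
      show ((a⁻¹ * b : ↥Γ) : G) ∈ Subgroup.centralizer {f} ⊓ Γ
      refine ⟨Subgroup.mem_centralizer_iff.2 ?_, (a⁻¹ * b : ↥Γ).2⟩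
      intro g hg
      have hgf : g = f := hg
      rw [hgf]
      show f * ((a : G)⁻¹ * b) = ((a : G)⁻¹ * b) * f
      calc f * ((a : G)⁻¹ * (b:G))
          = (a:G)⁻¹ * ((a:G) * f * (a:G)⁻¹) * (b:G) := by group
        _ = (a:G)⁻¹ * ((b : G) * f * (b : G)⁻¹) * (b:G) := by rw [h']
        _ = ((a : G)⁻¹ * (b:G)) * f := by group
    exact Finite.of_injective φ hinj
  exact Subgroup.index_ne_zero_of_finite

lemma aux_centralizer_finite {G : Type*} [Group G] (Γ : Subgroup G) {Fs : Set G}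
    (hFs : Fs.Finite) (horb : ∀ f ∈ Fs, ∀ γ ∈ Γ, γ * f * γ⁻¹ ∈ Fs) :
    (Subgroup.centralizer Fs ⊓ Γ).relIndex Γ ≠ 0 := by
  haveI := hFs.to_subtype
  set X : Subgroup G := (⨅ f : ↥Fs, (Subgroup.centralizer {(f : G)} ⊓ Γ)) ⊓ Γ with hX
  have hXrel : X.relIndex Γ ≠ 0 := by
    apply Subgroup.relIndex_inf_ne_zero
    · exact Subgroup.relIndex_iInf_ne_zero fun f =>
        aux_orbit Γ (f : G) hFs (horb f f.2)
    · rw [Subgroup.relIndex_self]; exact one_ne_zero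
  have hle : X ≤ Subgroup.centralizer Fs ⊓ Γ := by
    intro z hz
    refine ⟨Subgroup.mem_centralizer_iff.2 fun g hg => ?_, hz.2⟩
    have h1 : z ∈ (⨅ f : ↥Fs, (Subgroup.centralizer {(f : G)} ⊓ Γ)) := hz.1
    rw [Subgroup.mem_iInf] at h1
    have h2 := (h1 ⟨g, hg⟩).1
    exact Subgroup.mem_centralizer_iff.1 h2 g rfl
  intro h0
  exact hXrel (Subgroup.relIndex_eq_zero_of_le_left hle h0)

lemma aux_cocycle {G : Type*} [Group G] (Γ : Subgroup G)
    (D : Subgroup G) (hDΓ : D ≤ Γ) (hD : D.relIndex Γ ≠ 0)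
    (k : G) {Fs : Set G} (hF : Fs.Finite)
    (hcomm : ∀ x ∈ D, k * x * k⁻¹ * x⁻¹ ∈ Fs)
    (hcent : ∀ x ∈ D, x ∈ Subgroup.centralizer Fs) :
    (Subgroup.centralizer {k} ⊓ Γ).relIndex Γ ≠ 0 := by
  set ψ : ↥D →* G := MonoidHom.mk' (fun x => k * (x : G) * k⁻¹ * (x : G)⁻¹) (by
    intro x y
    have hy : k * (y : G) * k⁻¹ * (y : G)⁻¹ ∈ Fs := hcomm _ y.2
    have hx := Subgroup.mem_centralizer_iff.1 (hcent _ x.2) _ hy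
    have hconj : (x : G) * (k * (y:G) * k⁻¹ * (y:G)⁻¹) * (x:G)⁻¹
        = k * (y:G) * k⁻¹ * (y:G)⁻¹ := by rw [← hx]; group
    show k * ((x:G) * (y:G)) * k⁻¹ * ((x:G)*(y:G))⁻¹
        = (k * (x:G) * k⁻¹ * (x:G)⁻¹) * (k * (y:G) * k⁻¹ * (y:G)⁻¹)
    rw [← hconj]; group) with hψ
  have hker : ψ.ker.index ≠ 0 := by
    rw [Subgroup.index_ker]
    have hsub : (ψ.range : Set G) ⊆ Fs := by
      rintro - ⟨x, rfl⟩
      exact hcomm _ x.2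
    haveI : Finite ↥ψ.range := (hF.subset hsub).to_subtype
    exact Nat.card_ne_zero.mpr ⟨⟨1, one_mem _⟩, inferInstance⟩
  have hkerEq : (Subgroup.centralizer {k}).subgroupOf D = ψ.ker := by
    ext x
    simp only [Subgroup.mem_subgroupOf, MonoidHom.mem_ker, hψ, MonoidHom.mk'_apply]
    rw [Subgroup.mem_centralizer_singleton_iff]
    constructor
    · intro h; rw [← h]; group
    · intro h
      have : k * (x:G) = (x:G) * k := by
        calc k * (x:G) = (k * (x:G) * k⁻¹ * (x:G)⁻¹) * ((x:G) * k) := by group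
          _ = (x:G) * k := by rw [h]; group
      rw [this]
  have hrel : (Subgroup.centralizer {k}).relIndex D ≠ 0 := by
    show ((Subgroup.centralizer {k}).subgroupOf D).index ≠ 0
    rw [hkerEq]; exact hker
  have hchain : ((Subgroup.centralizer {k} ⊓ D)).relIndex Γ ≠ 0 := by
    have h1 : (Subgroup.centralizer {k} ⊓ D).relIndex D ≠ 0 := by
      rw [Subgroup.inf_relIndex_right]; exact hrel
    have := Subgroup.relIndex_mul_relIndex (H := Subgroup.centralizer {k} ⊓ D) (K := D) (L := Γ)
      inf_le_right hDΓ
    intro h0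
    rw [h0] at this
    exact mul_ne_zero h1 hD this
  intro h0
  exact hchain (Subgroup.relIndex_eq_zero_of_le_left
    (inf_le_inf le_rfl hDΓ) h0)

lemma aux_core {G : Type*} [Group G] (Γ T : Subgroup G) (hT : T.relIndex Γ ≠ 0) :
    ∃ Δ : Subgroup G, Δ ≤ T ⊓ Γ ∧ Δ.relIndex Γ ≠ 0 ∧
      ∀ γ ∈ Γ, ∀ x ∈ Δ, γ * x * γ⁻¹ ∈ Δ := by
  haveI : (T.subgroupOf Γ).FiniteIndex := ⟨hT⟩
  refine ⟨((T.subgroupOf Γ).normalCore).map Γ.subtype, ?_, ?_, ?_⟩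
  · rintro - ⟨y, hy, rfl⟩
    exact ⟨Subgroup.mem_subgroupOf.mp (Subgroup.normalCore_le _ hy), y.2⟩
  · have heq : (((T.subgroupOf Γ).normalCore).map Γ.subtype).subgroupOf Γ
        = (T.subgroupOf Γ).normalCore :=
      Subgroup.comap_map_eq_self_of_injective Γ.subtype_injective _
    show ((((T.subgroupOf Γ).normalCore).map Γ.subtype).subgroupOf Γ).index ≠ 0
    rw [heq]
    exact Subgroup.FiniteIndex.index_ne_zero
  · rintro γ hγ - ⟨y, hy, rfl⟩
    refine ⟨⟨γ, hγ⟩ * y * ⟨γ, hγ⟩⁻¹, ?_, rfl⟩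
    exact Subgroup.Normal.conj_mem inferInstance y hy ⟨γ, hγ⟩

lemma aux_C_finite {G : Type*} [Group G] [TopologicalSpace G] [IsTopologicalGroup G]
    (U : Subgroup G) (hUopen : IsOpen (U : Set G)) (hUcore : U.normalCore = ⊥)
    {C₀ : Set G} (hC₀ : IsCompact C₀) (Γ : Subgroup G)
    (htrans : ∀ g : G, ∃ c ∈ C₀, c⁻¹ * g ∈ Γ)
    (Δ : Subgroup G) (hΔΓ : Δ ≤ Γ) (hΔrel : Δ.relIndex Γ ≠ 0)
    (C : Subgroup G) (hCcomp : IsCompact (C : Set G))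
    (hCcent : (C : Set G) ⊆ Subgroup.centralizer (Δ : Set G)) :
    Set.Finite (C : Set G) := by
  obtain ⟨W, hWopen, hW1, hWprop⟩ := aux_unif hUopen (one_mem U) hC₀
  haveI : (Δ.subgroupOf Γ).FiniteIndex := ⟨hΔrel⟩
  have hRfin : (Set.range (fun q : ↥Γ ⧸ Δ.subgroupOf Γ =>
      ((Quotient.out q : ↥Γ) : G))).Finite := Set.finite_range _
  set R : Set G := Set.range (fun q : ↥Γ ⧸ Δ.subgroupOf Γ =>
      ((Quotient.out q : ↥Γ) : G)) with hR
  have hRtrans : ∀ γ ∈ Γ, ∃ r ∈ R, r⁻¹ * γ ∈ Δ := by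
    intro γ hγ
    refine ⟨((Quotient.out (QuotientGroup.mk (⟨γ, hγ⟩ : ↥Γ) :
        ↥Γ ⧸ Δ.subgroupOf Γ) : ↥Γ) : G), ⟨_, rfl⟩, ?_⟩
    have h1 : (QuotientGroup.mk (Quotient.out (QuotientGroup.mk (⟨γ, hγ⟩ : ↥Γ) :
        ↥Γ ⧸ Δ.subgroupOf Γ)) : ↥Γ ⧸ Δ.subgroupOf Γ)
        = QuotientGroup.mk (⟨γ, hγ⟩ : ↥Γ) := QuotientGroup.out_eq' _
    rw [QuotientGroup.eq] at h1
    exact h1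
  set O : Set G := ⋂ r ∈ R, (fun x => r * x * r⁻¹) ⁻¹' W with hO
  have hOopen : IsOpen O := hRfin.isOpen_biInter (fun r _ =>
    hWopen.preimage (by continuity))
  have hO1 : (1 : G) ∈ O := by
    simp only [hO, Set.mem_iInter, Set.mem_preimage]
    intro r _
    simpa using hW1
  have key : ∀ z ∈ C, z ∈ O → z = 1 := by
    intro z hzC hzO
    have hzcore : z ∈ U.normalCore := by
      intro b
      obtain ⟨c, hc, hγ⟩ := htrans b
      obtain ⟨r, hrR, hδ⟩ := hRtrans _ hγ
      have hbz : b * z * b⁻¹ = c * (r * z * r⁻¹) * c⁻¹ := by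
        have hcomm : (r⁻¹ * (c⁻¹ * b)) * z = z * (r⁻¹ * (c⁻¹ * b)) :=
          Subgroup.mem_centralizer_iff.1 (hCcent hzC) _ hδ
        calc b * z * b⁻¹
            = c * (r * ((r⁻¹ * (c⁻¹ * b)) * z) * (r⁻¹ * (c⁻¹ * b))⁻¹ * r⁻¹) * c⁻¹ := by group
          _ = c * (r * (z * (r⁻¹ * (c⁻¹ * b))) * (r⁻¹ * (c⁻¹ * b))⁻¹ * r⁻¹) * c⁻¹ := by
              rw [hcomm]
          _ = c * (r * z * r⁻¹) * c⁻¹ := by group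
      rw [hbz]
      apply hWprop c hc
      have := Set.mem_iInter.1 hzO r
      exact Set.mem_iInter.1 this hrR
    rw [hUcore] at hzcore
    simpa using hzcore
  have hcover : (C : Set G) ⊆ ⋃ i : ↥(C : Set G), (fun x => (i : G) * x) '' O :=
    fun z hz => Set.mem_iUnion.2 ⟨⟨z, hz⟩, ⟨1, hO1, by simp⟩⟩
  obtain ⟨t, ht⟩ := hCcomp.elim_finite_subcover _
    (fun i : ↥(C : Set G) => (isOpenMap_mul_left (i : G)) O hOopen) hcover
  have hsub : (C : Set G) ⊆ (fun i : ↥(C : Set G) => (i : G)) '' (t : Set ↥(C : Set G)) := by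
    intro z hz
    obtain ⟨i, hit, w, hwO, hweq⟩ : ∃ i ∈ t, ∃ w ∈ O, (i : G) * w = z := by
      have := ht hz
      simp only [Set.mem_iUnion, Set.mem_image] at this
      obtain ⟨i, hit, w, hwO, hweq⟩ := this
      exact ⟨i, hit, w, hwO, hweq⟩
    have hwC : w ∈ C := by
      have : w = (i : G)⁻¹ * z := by rw [← hweq]; group
      rw [this]
      exact mul_mem (inv_mem i.2) hz
    have := key w hwC hwO
    rw [this, mul_one] at hweq
    exact ⟨i, hit, hweq⟩
  exact Set.Finite.subset ((t.finite_toSet).image _) hsub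

theorem stmt12 {G : Type*} [Group G] [TopologicalSpace G] [IsTopologicalGroup G]
    [T2Space G] [LocallyCompactSpace G] [TotallyDisconnectedSpace G]
    (U : Subgroup G) (hUcompact : IsCompact (U : Set G)) (hUopen : IsOpen (U : Set G))
    (hUcore : U.normalCore = ⊥)
    (Γ : Subgroup G) (hdisc : DiscreteTopology ↥Γ) (hcoc : CompactSpace (G ⧸ Γ))
    (hfg : Γ.FG)
    (K : Subgroup G) (hKnormal : K.Normal) (hKcompact : IsCompact (K : Set G))
    (H : Subgroup G) (hHcomm : ∀ h ∈ H, Subgroup.Commensurable (conjSubgroup h Γ) Γ) (hHfg : H.FG)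
    (hvirt : (K ⊔ Γ).relIndex (K ⊔ H) ≠ 0) :
    Γ.relIndex H ≠ 0 := by
  classical
  haveI := hdisc
  haveI := hKnormal
  -- Γ is closed, so F := K ⊓ Γ is finite
  have hΓclosed : IsClosed (Γ : Set G) := Subgroup.isClosed_of_discrete
  have hFsfin : Set.Finite ((K ⊓ Γ : Subgroup G) : Set G) := by
    rw [Subgroup.coe_inf]
    haveI : DiscreteTopology ↥((K : Set G) ∩ (Γ : Set G)) :=
      DiscreteTopology.of_subset hdisc Set.inter_subset_right
    exact (hKcompact.inter_right hΓclosed).finite (isDiscrete_iff_discreteTopology.mpr inferInstance)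
  set Fs : Set G := ((K ⊓ Γ : Subgroup G) : Set G) with hFsdef
  have horb : ∀ f ∈ Fs, ∀ γ ∈ Γ, γ * f * γ⁻¹ ∈ Fs := by
    intro f hf γ hγ
    have hf' : f ∈ K ⊓ Γ := hf
    show γ * f * γ⁻¹ ∈ K ⊓ Γ
    exact Subgroup.mem_inf.2 ⟨hKnormal.conj_mem f hf'.1 γ, mul_mem (mul_mem hγ hf'.2) (inv_mem hγ)⟩
  -- reduction to H₁ := H ⊓ (K ⊔ Γ)
  set H₁ : Subgroup G := H ⊓ (K ⊔ Γ) with hH₁def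
  have hH₁relH : H₁.relIndex H ≠ 0 := by
    have h1 : (K ⊔ Γ).relIndex H ≠ 0 := by
      intro h0
      exact hvirt (Subgroup.relIndex_eq_zero_of_le_right le_sup_right h0)
    rw [hH₁def, Subgroup.inf_relIndex_left]
    exact h1
  -- H₁ is finitely generated
  have hH₁fg : H₁.FG := by
    haveI : Group.FG ↥H := (Group.fg_iff_subgroup_fg H).2 hHfg
    haveI : (H₁.subgroupOf H).FiniteIndex := ⟨hH₁relH⟩
    have hfg1 : (H₁.subgroupOf H).FG :=
      (Group.fg_iff_subgroup_fg (H₁.subgroupOf H)).1 inferInstance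
    have : ((H₁.subgroupOf H).map H.subtype).FG := by
      obtain ⟨s, hs⟩ := hfg1
      refine ⟨s.image H.subtype, ?_⟩
      rw [Finset.coe_image, ← MonoidHom.map_closure, hs]
    rwa [Subgroup.subgroupOf_map_subtype, inf_of_le_left inf_le_left] at this
  obtain ⟨S, hSclos, hSfin⟩ : ∃ S : Set G, Subgroup.closure S = H₁ ∧ S.Finite := by
    rw [← Subgroup.fg_iff]; exact hH₁fg
  haveI := hSfin.to_subtype
  have hSsub : S ⊆ H₁ := hSclos ▸ Subgroup.subset_closure
  -- per-generator data
  have hper : ∀ s : ↥S, ∃ k γ : G, k ∈ K ∧ γ ∈ Γ ∧ k * γ = (s : G) ∧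
      (Subgroup.centralizer {k} ⊓ Γ).relIndex Γ ≠ 0 := by
    rintro ⟨s, hsS⟩
    have hsH₁ : s ∈ H₁ := hSsub hsS
    have hsH : s ∈ H := hsH₁.1
    have hsKΓ : s ∈ K ⊔ Γ := hsH₁.2
    have hsmul : s ∈ (K : Set G) * (Γ : Set G) := by
      rw [← Subgroup.normal_mul]; exact hsKΓ
    obtain ⟨k, hkK, γ, hγΓ, hkγ⟩ := Set.mem_mul.1 hsmul
    refine ⟨k, γ, hkK, hγΓ, hkγ, ?_⟩
    -- commensuration data
    have hcs := (hHcomm s⁻¹ (inv_mem hsH)).1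
    set Y : Subgroup G := conjSubgroup s⁻¹ Γ ⊓ Γ with hYdef
    have hYrel : Y.relIndex Γ ≠ 0 := by
      rw [hYdef, Subgroup.inf_relIndex_right]; exact hcs
    set Z : Subgroup G := conjSubgroup γ Y with hZdef
    have hZrel : Z.relIndex Γ ≠ 0 := by
      have := relIndex_conjSubgroup Y Γ γ
      rw [conjSubgroup_self Γ hγΓ] at this
      rw [hZdef, this]; exact hYrel
    have hZΓ : Z ≤ Γ := by
      rintro x hx
      obtain ⟨a, haY, rfl⟩ := mem_conjSubgroup.1 hx
      exact mul_mem (mul_mem hγΓ haY.2) (inv_mem hγΓ)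
    have hcentrel : (Subgroup.centralizer Fs ⊓ Γ).relIndex Γ ≠ 0 :=
      aux_centralizer_finite Γ hFsfin horb
    set D : Subgroup G := Z ⊓ (Subgroup.centralizer Fs ⊓ Γ) with hDdef
    have hDrel : D.relIndex Γ ≠ 0 :=
      Subgroup.relIndex_inf_ne_zero hZrel hcentrel
    have hDΓ : D ≤ Γ := le_trans inf_le_right inf_le_right
    have hkeq : k = s * γ⁻¹ := by rw [← hkγ]; group
    have hcomm2 : ∀ x ∈ D, k * x * k⁻¹ * x⁻¹ ∈ Fs := by
      intro x hx
      have hxZ : x ∈ Z := hx.1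
      obtain ⟨w, hwY, hwx⟩ := mem_conjSubgroup.1 hxZ
      obtain ⟨v, hvΓ, hvw⟩ := mem_conjSubgroup.1 hwY.1
      have hxΓ : x ∈ Γ := hDΓ hx
      have hval : k * x * k⁻¹ * x⁻¹ = v * x⁻¹ := by
        rw [hkeq, ← hwx, ← hvw]; group
      refine Subgroup.mem_inf.2 ⟨?_, ?_⟩
      · have h1 : x * k⁻¹ * x⁻¹ ∈ K := hKnormal.conj_mem k⁻¹ (inv_mem hkK) x
        have : k * x * k⁻¹ * x⁻¹ = k * (x * k⁻¹ * x⁻¹) := by group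
        rw [this]
        exact mul_mem hkK h1
      · rw [hval]
        exact mul_mem hvΓ (inv_mem hxΓ)
    have hcent2 : ∀ x ∈ D, x ∈ Subgroup.centralizer Fs := fun x hx => hx.2.1
    exact aux_cocycle Γ D hDΓ hDrel k hFsfin hcomm2 hcent2
  choose kf γf hkK hγΓ hkγ hkrel using hper
  -- intersection of centralizers
  set T : Subgroup G := (⨅ s : ↥S, (Subgroup.centralizer {kf s} ⊓ Γ)) ⊓ Γ with hTdef
  have hTrel : T.relIndex Γ ≠ 0 := by
    apply Subgroup.relIndex_inf_ne_zero
    · exact Subgroup.relIndex_iInf_ne_zero fun s => hkrel s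
    · rw [Subgroup.relIndex_self]; exact one_ne_zero
  obtain ⟨Δ, hΔle, hΔrel, hΔconj⟩ := aux_core Γ T hTrel
  have hΔΓ : Δ ≤ Γ := le_trans hΔle inf_le_right
  -- the finite subgroup C
  set C : Subgroup G := K ⊓ Subgroup.centralizer (Δ : Set G) with hCdef
  have hkC : ∀ s : ↥S, kf s ∈ C := by
    intro s
    refine ⟨hkK s, Subgroup.mem_centralizer_iff.2 fun d hd => ?_⟩
    have hdT : d ∈ T := (hΔle hd).1
    have hdC : d ∈ Subgroup.centralizer {kf s} := by
      have h1 : d ∈ (⨅ s : ↥S, (Subgroup.centralizer {kf s} ⊓ Γ)) := hdT.1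
      rw [Subgroup.mem_iInf] at h1
      exact (h1 s).1
    exact Subgroup.mem_centralizer_singleton_iff.1 hdC
  have hCcentset : (C : Set G) ⊆ Subgroup.centralizer (Δ : Set G) := fun x hx => hx.2
  have hCclosed : IsClosed ((Subgroup.centralizer (Δ : Set G) : Subgroup G) : Set G) := by
    have heq : ((Subgroup.centralizer (Δ : Set G) : Subgroup G) : Set G)
        = ⋂ d ∈ (Δ : Set G), {x : G | d * x = x * d} := by
      ext x
      simp only [SetLike.mem_coe, Subgroup.mem_centralizer_iff, Set.mem_iInter,
        Set.mem_setOf_eq]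
    rw [heq]
    exact isClosed_biInter fun d _ =>
      isClosed_eq (continuous_const.mul continuous_id) (continuous_id.mul continuous_const)
  have hCcomp : IsCompact (C : Set G) := by
    rw [hCdef, Subgroup.coe_inf]
    exact hKcompact.inter_right hCclosed
  obtain ⟨C₀, hC₀comp, hC₀trans⟩ := aux_transversal Γ hcoc
  have hCfin : Set.Finite (C : Set G) :=
    aux_C_finite U hUopen hUcore hC₀comp Γ hC₀trans Δ hΔΓ hΔrel C hCcomp hCcentset
  -- C is normalized by Γ
  have hCconj : ∀ γ ∈ Γ, ∀ c ∈ C, γ * c * γ⁻¹ ∈ C := by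
    intro γ hγ c hc
    refine ⟨hKnormal.conj_mem c hc.1 γ, Subgroup.mem_centralizer_iff.2 fun d hd => ?_⟩
    have hd' : γ⁻¹ * d * γ ∈ Δ := by
      have := hΔconj γ⁻¹ (inv_mem hγ) d hd
      simpa using this
    have hcd := Subgroup.mem_centralizer_iff.1 hc.2 _ hd'
    calc d * (γ * c * γ⁻¹) = γ * ((γ⁻¹ * d * γ) * c) * γ⁻¹ := by group
      _ = γ * (c * (γ⁻¹ * d * γ)) * γ⁻¹ := by rw [hcd]
      _ = (γ * c * γ⁻¹) * d := by group
  -- the subgroup C * Γ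
  set P : Subgroup G :=
    { carrier := (C : Set G) * (Γ : Set G)
      one_mem' := ⟨1, one_mem C, 1, one_mem Γ, mul_one 1⟩
      mul_mem' := by
        rintro a b ⟨c, hcC, γ, hγΓ, rfl⟩ ⟨c', hc'C, γ', hγ'Γ, rfl⟩
        refine ⟨c * (γ * c' * γ⁻¹), mul_mem hcC (hCconj γ hγΓ c' hc'C), γ * γ', mul_mem hγΓ hγ'Γ, ?_⟩
        group
      inv_mem' := by
        rintro a ⟨c, hcC, γ, hγΓ, rfl⟩
        refine ⟨γ⁻¹ * c⁻¹ * γ, ?_, γ⁻¹, inv_mem hγΓ, ?_⟩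
        · have := hCconj γ⁻¹ (inv_mem hγΓ) c⁻¹ (inv_mem hcC)
          simpa using this
        · group } with hPdef
  have hΓP : Γ ≤ P := fun γ hγ => ⟨1, one_mem C, γ, hγ, one_mul γ⟩
  have hCP : ∀ c ∈ C, c ∈ P := fun c hc => ⟨c, hc, 1, one_mem Γ, mul_one c⟩
  -- Γ has finite relIndex in P
  have hΓPrel : Γ.relIndex P ≠ 0 := by
    haveI : Finite ↥(C : Set G) := hCfin.to_subtype
    have hsurj : Function.Surjective
        (fun c : ↥(C : Set G) => (QuotientGroup.mk ⟨(c : G), hCP c c.2⟩ :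
          ↥P ⧸ Γ.subgroupOf P)) := by
      intro q
      induction q using Quotient.inductionOn'
      rename_i x
      obtain ⟨c, hcC, γ, hγΓ, hcγ⟩ := x.2
      refine ⟨⟨c, hcC⟩, ?_⟩
      apply Quotient.sound'
      rw [QuotientGroup.leftRel_apply]
      show ((⟨c, hCP c hcC⟩ : ↥P)⁻¹ * x : ↥P) ∈ Γ.subgroupOf P
      rw [Subgroup.mem_subgroupOf]
      show c⁻¹ * (x : G) ∈ Γ
      have : c⁻¹ * (x : G) = γ := by rw [← hcγ]; group
      rw [this]; exact hγΓ
    haveI : Finite (↥P ⧸ Γ.subgroupOf P) := Finite.of_surjective _ hsurj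
    exact Subgroup.index_ne_zero_of_finite
  -- H₁ ≤ P
  have hH₁P : H₁ ≤ P := by
    rw [← hSclos]
    apply Subgroup.closure_le P |>.2
    intro s hsS
    have : kf ⟨s, hsS⟩ * γf ⟨s, hsS⟩ = s := hkγ ⟨s, hsS⟩
    rw [← this]
    exact mul_mem (hCP _ (hkC ⟨s, hsS⟩)) (hΓP (hγΓ ⟨s, hsS⟩))
  -- conclude
  have hΓH₁ : Γ.relIndex H₁ ≠ 0 := by
    intro h0
    exact hΓPrel (Subgroup.relIndex_eq_zero_of_le_right hH₁P h0)
  have hfin1 : (Γ ⊓ H₁).relIndex H ≠ 0 := by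
    have h1 : (Γ ⊓ H₁).relIndex H₁ ≠ 0 := by
      rw [Subgroup.inf_relIndex_right]; exact hΓH₁
    have h2 := Subgroup.relIndex_mul_relIndex (H := Γ ⊓ H₁) (K := H₁) (L := H)
      inf_le_right inf_le_left
    intro h0
    rw [h0] at h2
    exact mul_ne_zero h1 hH₁relH h2
  intro h0
  apply hfin1
  apply Subgroup.relIndex_eq_zero_of_le_left (inf_le_inf le_rfl inf_le_left)
  rw [Subgroup.inf_relIndex_right]
  exact h0
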